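/- Let α, β, γ, μ, ν be an admissible solution of System A on an interval [0,T) with μ ≡ 0 and ν(0) ≠ 0. Then ν(t) ≠ 0 for all t ∈ [0,T), and the function ε(t) := ν(t)²/(β(t)γ(t)) is strictly decreasing on [0,T). -/

import Mathlib

/-- **System A**: the homogeneous Ricci flow equations on `SO(3) ⋉ ℝ³ / SO(2)` for
real-valued differentiable functions `α β γ μ ν` on a set `s`, with `τ := μ² + ν²`,
together with the admissibility conditions `α > 0`, `β > 0`, `γ > 0`, `βγ > τ`. -/
def IsAdmissibleSolutionA (α β γ μ ν : ℝ → ℝ) (s : Set ℝ) : Prop :=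
  ∀ t ∈ s,
    0 < α t ∧ 0 < β t ∧ 0 < γ t ∧
    μ t ^ 2 + ν t ^ 2 < β t * γ t ∧
    HasDerivWithinAt α
      (2 * (β t ^ 2 - α t ^ 2) / (β t * γ t - (μ t ^ 2 + ν t ^ 2)) -
        4 * α t ^ 2 * ν t ^ 2 / (β t * γ t - (μ t ^ 2 + ν t ^ 2)) ^ 2) s t ∧
    HasDerivWithinAt β
      (β t / α t * ((α t ^ 2 - β t ^ 2) / (β t * γ t - (μ t ^ 2 + ν t ^ 2)))) s t ∧
    HasDerivWithinAt γ
      (-4 + 2 * β t / α t +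
        γ t / α t * ((α t ^ 2 - β t ^ 2) / (β t * γ t - (μ t ^ 2 + ν t ^ 2)))) s t ∧
    HasDerivWithinAt μ
      (μ t * (α t ^ 2 - β t ^ 2) / (α t * (β t * γ t - (μ t ^ 2 + ν t ^ 2)))) s t ∧
    HasDerivWithinAt ν
      (-(ν t * (α t ^ 2 + β t ^ 2)) / (α t * (β t * γ t - (μ t ^ 2 + ν t ^ 2)))) s t

/-- For an admissible solution of System A on `[0,T)` with `μ ≡ 0` and `ν(0) ≠ 0`,
one has `ν(t) ≠ 0` for all `t ∈ [0,T)` and `ε(t) := ν(t)²/(β(t)γ(t))` is strictly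
decreasing on `[0,T)`. -/
theorem systemA_epsilon_strictAnti (T : ℝ) (hT : 0 < T) (α β γ μ ν : ℝ → ℝ)
    (h : IsAdmissibleSolutionA α β γ μ ν (Set.Ico 0 T))
    (hμ : ∀ t ∈ Set.Ico (0 : ℝ) T, μ t = 0) (hν0 : ν 0 ≠ 0) :
    (∀ t ∈ Set.Ico (0 : ℝ) T, ν t ≠ 0) ∧
      StrictAntiOn (fun t => ν t ^ 2 / (β t * γ t)) (Set.Ico 0 T) := by
  have hαc : ContinuousOn α (Set.Ico 0 T) := fun t ht =>
    ((h t ht).2.2.2.2.1).continuousWithinAt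
  have hβc : ContinuousOn β (Set.Ico 0 T) := fun t ht =>
    ((h t ht).2.2.2.2.2.1).continuousWithinAt
  have hγc : ContinuousOn γ (Set.Ico 0 T) := fun t ht =>
    ((h t ht).2.2.2.2.2.2.1).continuousWithinAt
  have hνc : ContinuousOn ν (Set.Ico 0 T) := fun t ht =>
    ((h t ht).2.2.2.2.2.2.2.2).continuousWithinAt
  have hD : ∀ t ∈ Set.Ico (0 : ℝ) T, 0 < β t * γ t - ν t ^ 2 := by
    intro t ht
    have h4 := (h t ht).2.2.2.1
    rw [hμ t ht] at h4
    nlinarith [h4]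
  -- `ν` never vanishes
  have hnv : ∀ t ∈ Set.Ico (0 : ℝ) T, ν t ≠ 0 := by
    by_contra hcon
    push_neg at hcon
    obtain ⟨t₁, ht₁, hνt₁⟩ := hcon
    have hsub₁ : Set.Icc (0 : ℝ) t₁ ⊆ Set.Ico 0 T := fun x hx =>
      ⟨hx.1, lt_of_le_of_lt hx.2 ht₁.2⟩
    set A : Set ℝ := Set.Icc (0 : ℝ) t₁ ∩ ν ⁻¹' {0} with hA
    have hAne : A.Nonempty := ⟨t₁, ⟨ht₁.1, le_refl _⟩, hνt₁⟩
    have hAbdd : BddBelow A := ⟨0, fun x hx => hx.1.1⟩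
    have hAclosed : IsClosed A :=
      (hνc.mono hsub₁).preimage_isClosed_of_isClosed isClosed_Icc isClosed_singleton
    set t₀ := sInf A with ht₀def
    have ht₀A : t₀ ∈ A := hAclosed.csInf_mem hAne hAbdd
    have ht₀mem : t₀ ∈ Set.Icc (0 : ℝ) t₁ := ht₀A.1
    have hνt₀ : ν t₀ = 0 := ht₀A.2
    have ht₀pos : 0 < t₀ := by
      rcases ht₀mem.1.lt_or_eq with h1 | h1
      · exact h1
      · exact absurd (h1 ▸ hνt₀) hν0
    have hIccsub : Set.Icc (0 : ℝ) t₀ ⊆ Set.Ico 0 T := fun x hx =>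
      hsub₁ ⟨hx.1, hx.2.trans ht₀mem.2⟩
    set c : ℝ → ℝ := fun t => -(α t ^ 2 + β t ^ 2) / (α t * (β t * γ t - ν t ^ 2)) with hc
    have hden : ∀ x ∈ Set.Icc (0 : ℝ) t₀, α x * (β x * γ x - ν x ^ 2) ≠ 0 := by
      intro x hx
      exact ne_of_gt (mul_pos (h x (hIccsub hx)).1 (hD x (hIccsub hx)))
    have hccont : ContinuousOn c (Set.Icc 0 t₀) := by
      apply ContinuousOn.div
      · exact (((hαc.mono hIccsub).pow 2).add ((hβc.mono hIccsub).pow 2)).neg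
      · exact (hαc.mono hIccsub).mul (((hβc.mono hIccsub).mul (hγc.mono hIccsub)).sub
          ((hνc.mono hIccsub).pow 2))
      · exact hden
    obtain ⟨C, hC⟩ := (isCompact_Icc).exists_bound_of_continuousOn hccont
    have hmapsTo : ∀ x ∈ Set.Icc (0 : ℝ) t₀, t₀ - x ∈ Set.Icc (0 : ℝ) t₀ := by
      intro x hx
      exact ⟨by linarith [hx.2], by linarith [hx.1]⟩
    have hwcont : ContinuousOn (fun s => ν (t₀ - s)) (Set.Icc 0 t₀) := by
      apply (hνc.mono hIccsub).comp
      · exact (continuous_const.sub continuous_id).continuousOn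
      · intro x hx
        exact hmapsTo x hx
    have hwderiv : ∀ s ∈ Set.Ico (0 : ℝ) t₀,
        HasDerivWithinAt (fun s => ν (t₀ - s)) (c (t₀ - s) * ν (t₀ - s) * (-1))
          (Set.Ici s) s := by
      intro s hs
      have hsmem : s ∈ Set.Icc (0 : ℝ) t₀ := ⟨hs.1, hs.2.le⟩
      have hmem : t₀ - s ∈ Set.Ico (0 : ℝ) T := hIccsub (hmapsTo s hsmem)
      have hν' := (h _ hmem).2.2.2.2.2.2.2.2
      have hν'' : HasDerivWithinAt ν (c (t₀ - s) * ν (t₀ - s)) (Set.Ico 0 T) (t₀ - s) := by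
        convert hν' using 1
        rw [hμ _ hmem, hc]
        ring
      have hinner : HasDerivWithinAt (fun u : ℝ => t₀ - u) (-1) (Set.Icc 0 t₀) s := by
        simpa using ((hasDerivAt_id' s).const_sub t₀).hasDerivWithinAt
      have hcomp := hν''.comp s hinner
        (fun x hx => hIccsub (hmapsTo x hx))
      exact hcomp.mono_of_mem_nhdsWithin (Icc_mem_nhdsGE_of_mem hs)
    have hbound : ∀ s ∈ Set.Ico (0 : ℝ) t₀,
        ‖c (t₀ - s) * ν (t₀ - s) * (-1)‖ ≤ C * ‖ν (t₀ - s)‖ + 0 := by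
      intro s hs
      rw [norm_mul, norm_neg, norm_one, mul_one, norm_mul, add_zero]
      exact mul_le_mul_of_nonneg_right (hC _ (hmapsTo s ⟨hs.1, hs.2.le⟩)) (norm_nonneg _)
    have hw0 : ‖ν (t₀ - 0)‖ ≤ 0 := by simp [hνt₀]
    have hfin := norm_le_gronwallBound_of_norm_deriv_right_le hwcont hwderiv hw0 hbound t₀
      (Set.right_mem_Icc.2 ht₀pos.le)
    rw [gronwallBound_ε0] at hfin
    simp only [sub_self, zero_mul] at hfin
    exact hν0 (norm_le_zero_iff.mp hfin)
  refine ⟨hnv, ?_⟩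
  apply strictAntiOn_of_deriv_neg (convex_Ico 0 T)
  · exact (hνc.pow 2).div (hβc.mul hγc)
      (fun t ht => ne_of_gt (mul_pos (h t ht).2.1 (h t ht).2.2.1))
  · intro t ht
    rw [interior_Ico] at ht
    have ht' : t ∈ Set.Ico (0 : ℝ) T := ⟨ht.1.le, ht.2⟩
    obtain ⟨ha, hb, hg, hlt, hdα, hdβ, hdγ, hdμ, hdν⟩ := h t ht'
    have hmemn : Set.Ico (0 : ℝ) T ∈ nhds t := Ico_mem_nhds ht.1 ht.2
    rw [hμ t ht'] at hdβ hdγ hdν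
    have hDt := hD t ht'
    have hn := hnv t ht'
    have hβa := hdβ.hasDerivAt hmemn
    have hγa := hdγ.hasDerivAt hmemn
    have hνa := hdν.hasDerivAt hmemn
    have hne : β t * γ t ≠ 0 := ne_of_gt (mul_pos hb hg)
    have hE := (hνa.pow 2).div (hβa.mul hγa) hne
    have hE' : HasDerivAt (fun t => ν t ^ 2 / (β t * γ t))
        (-(2 * ν t ^ 2 * (2 * α t ^ 2 * (β t * γ t) - 2 * α t * β t * (β t * γ t - ν t ^ 2)
          + β t ^ 2 * (β t * γ t - ν t ^ 2))) /
        (α t * (β t * γ t - ν t ^ 2) * (β t * γ t) ^ 2)) t := by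
      refine hE.congr_deriv ?_
      have ha' : α t ≠ 0 := ha.ne'
      have hD' : β t * γ t - ν t ^ 2 ≠ 0 := hDt.ne'
      have hD'' : β t * γ t - ((0 : ℝ) ^ 2 + ν t ^ 2) ≠ 0 := by
        simpa using hD'
      simp only [Pi.mul_apply, Pi.pow_apply]
      field_simp
      ring
    rw [hE'.deriv]
    apply div_neg_of_neg_of_pos
    · have hn2 : 0 < ν t ^ 2 := (sq_nonneg _).lt_of_ne (Ne.symm (pow_ne_zero 2 hn))
      have hP : 0 < 2 * α t ^ 2 * (β t * γ t) - 2 * α t * β t * (β t * γ t - ν t ^ 2)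
          + β t ^ 2 * (β t * γ t - ν t ^ 2) := by
        nlinarith [mul_pos (mul_pos (by norm_num : (0:ℝ) < 2) (mul_pos ha ha)) hn2,
          mul_nonneg hDt.le (sq_nonneg (α t - β t)),
          mul_nonneg hDt.le (sq_nonneg (α t))]
      nlinarith [mul_pos hn2 hP]
    · exact mul_pos (mul_pos ha hDt) (pow_pos (mul_pos hb hg) 2)
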